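/- Duality of the Kurdyka-Łojasiewicz inequality: let Φ(x,y) = (∇f(y), ∇f(x)) be a C¹-diffeomorphism between neighborhoods W of (x̄,ȳ) and V of (ū,v̄)=(∇f(ȳ),∇f(x̄)), with ‖Φ'(x,y)ᵀ‖ ≤ k⁻¹ on W, and let F* satisfy F(x,y) = F*(Φ(x,y)). If F satisfies the KŁ inequality φ'(F(x,y) - F(x̄,ȳ)) · dist(0, ∂F(x,y)) ≥ γ on W for values F(x̄,ȳ) < F < F(x̄,ȳ)+η, then F* satisfies the KŁ inequality on V with the same φ, η and constant kγ. -/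

import Mathlib

open scoped RealInnerProductSpace
open Filter
open scoped Classical

variable {H : Type*} [NormedAddCommGroup H] [InnerProductSpace ℝ H]

/-- The Fréchet (regular) subdifferential of an extended-real-valued function. -/
def frechetSubdiff (F : H → EReal) (x : H) : Set H :=
  {v | ∃ fx : ℝ, F x = (fx : EReal) ∧ ∀ ε : ℝ, 0 < ε → ∃ δ : ℝ, 0 < δ ∧
    ∀ y : H, ‖y - x‖ < δ →
      ((fx + ⟪v, y - x⟫ - ε * ‖y - x‖ : ℝ) : EReal) ≤ F y}

/-- The limiting (Mordukhovich) subdifferential of an extended-real-valued function. -/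
def limitingSubdiff (F : H → EReal) (x : H) : Set H :=
  {v | ∃ xs vs : ℕ → H, (∀ k, vs k ∈ frechetSubdiff F (xs k)) ∧
    Tendsto xs atTop (nhds x) ∧ Tendsto vs atTop (nhds v) ∧
    Tendsto (fun k => F (xs k)) atTop (nhds (F x))}

/-- Duality of the Kurdyka-Łojasiewicz inequality: if `F = F* ∘ Φ` for the C¹
diffeomorphism `Φ(x,y) = (∇f(y), ∇f(x))` between `W` and `V = Φ(W)`, the chain rule
`∂F(p) = Φ'(p)ᵀ ∂F*(Φ(p))` holds on `W`, and `‖Φ'(p)ᵀ‖ ≤ k⁻¹` on `W`, then the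
KŁ inequality for `F` on `W` (with de-singularizer `φ` and constant `γ`) transfers to a
KŁ inequality for `F*` on `V` with the same `φ`, `η` and constant `kγ`. -/
theorem kl_inequality_duality {d : ℕ}
    (f' : EuclideanSpace ℝ (Fin d) → EuclideanSpace ℝ (Fin d))
    (Φ : WithLp 2 (EuclideanSpace ℝ (Fin d) × EuclideanSpace ℝ (Fin d)) →
         WithLp 2 (EuclideanSpace ℝ (Fin d) × EuclideanSpace ℝ (Fin d)))
    (hΦ : ∀ p, Φ p =
      (WithLp.equiv 2 (EuclideanSpace ℝ (Fin d) × EuclideanSpace ℝ (Fin d))).symm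
        (f' p.ofLp.2, f' p.ofLp.1))
    (W V : Set (WithLp 2 (EuclideanSpace ℝ (Fin d) × EuclideanSpace ℝ (Fin d))))
    (hWopen : IsOpen W) (hVopen : IsOpen V)
    (hWV : Φ '' W = V) (hinj : Set.InjOn Φ W)
    (Φ' : WithLp 2 (EuclideanSpace ℝ (Fin d) × EuclideanSpace ℝ (Fin d)) →
      WithLp 2 (EuclideanSpace ℝ (Fin d) × EuclideanSpace ℝ (Fin d)) →L[ℝ]
      WithLp 2 (EuclideanSpace ℝ (Fin d) × EuclideanSpace ℝ (Fin d)))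
    (hΦdiff : ∀ p ∈ W, HasFDerivAt Φ (Φ' p) p)
    (k : ℝ) (hk : 0 < k)
    (hbound : ∀ p ∈ W, ‖ContinuousLinearMap.adjoint (Φ' p)‖ ≤ k⁻¹)
    (F Fs : WithLp 2 (EuclideanSpace ℝ (Fin d) × EuclideanSpace ℝ (Fin d)) → EReal)
    (hFF : ∀ p, F p = Fs (Φ p))
    (hchain : ∀ p ∈ W, limitingSubdiff F p =
      (fun h => ContinuousLinearMap.adjoint (Φ' p) h) '' limitingSubdiff Fs (Φ p))
    (pbar : WithLp 2 (EuclideanSpace ℝ (Fin d) × EuclideanSpace ℝ (Fin d)))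
    (hpbarW : pbar ∈ W)
    (c : ℝ) (hc : F pbar = (c : EReal))
    -- the de-singularizing function
    (φ φ' : ℝ → ℝ) (η γ : ℝ) (hη : 0 < η) (hγ : 0 < γ)
    (hφ0 : φ 0 = 0) (hφcont : ContinuousOn φ (Set.Ico 0 η))
    (hφconc : ConcaveOn ℝ (Set.Ico 0 η) φ)
    (hφdiff : ∀ s ∈ Set.Ioo (0 : ℝ) η, HasDerivAt φ (φ' s) s)
    (hφ'pos : ∀ s ∈ Set.Ioo (0 : ℝ) η, 0 < φ' s)
    -- the KŁ inequality for F on W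
    (hKL : ∀ p ∈ W, ∀ t : ℝ, F p = (t : EReal) → c < t → t < c + η →
      ∀ g ∈ limitingSubdiff F p, γ ≤ φ' (t - c) * ‖g‖) :
    Fs (Φ pbar) = (c : EReal) ∧
    ∀ q ∈ V, ∀ t : ℝ, Fs q = (t : EReal) → c < t → t < c + η →
      ∀ h ∈ limitingSubdiff Fs q, k * γ ≤ φ' (t - c) * ‖h‖ := by
  constructor
  · rw [← hFF]; exact hc
  · intro q hqV t hFst hct htc h hsub
    obtain ⟨p, hpW, rfl⟩ : ∃ p ∈ W, Φ p = q := by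
      rw [← hWV] at hqV; obtain ⟨p, hpW, hpq⟩ := hqV; exact ⟨p, hpW, hpq⟩
    have hFp : F p = (t : EReal) := by rw [hFF]; exact hFst
    have hg : ContinuousLinearMap.adjoint (Φ' p) h ∈ limitingSubdiff F p := by
      rw [hchain p hpW]; exact ⟨h, hsub, rfl⟩
    have hKL' := hKL p hpW t hFp hct htc _ hg
    have hφ'p : 0 < φ' (t - c) := hφ'pos _ ⟨by linarith, by linarith⟩
    have hnorm : ‖ContinuousLinearMap.adjoint (Φ' p) h‖ ≤ k⁻¹ * ‖h‖ :=
      le_trans (ContinuousLinearMap.le_opNorm _ _)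
        (mul_le_mul_of_nonneg_right (hbound p hpW) (norm_nonneg _))
    have : γ ≤ φ' (t - c) * (k⁻¹ * ‖h‖) :=
      le_trans hKL' (mul_le_mul_of_nonneg_left hnorm hφ'p.le)
    have := mul_le_mul_of_nonneg_left this hk.le
    calc k * γ ≤ k * (φ' (t - c) * (k⁻¹ * ‖h‖)) := this
      _ = φ' (t - c) * ‖h‖ := by field_simp
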